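/- Let P be a finite root system of unit vectors in ℝ^N (N ≥ 1) satisfying condition (EA), let ρ ≥ 0 and r > 0, and set 𝔅_r := the open ball of radius σ1(P)⁻¹σ2(P)(ρ + 2r) centered at the origin. Then for every point x₀ ∈ ℝ^N with x₀ ∉ 𝔅_r there exists a basis A ⊆ P of ℝ^N, depending only on P, ρ, r and x₀ (and not on Ω), such that for every set Ω ⊆ ℝ^N satisfying the reflection property (RP) with respect to P and ρ and containing 𝔅_r, one has: x + Co_r(A) ⊆ Ω^c for every x ∈ Ω^c ∩ B(x₀, r), and y − Co_r(A) ⊆ Ω for every y ∈ Ω ∩ B(x₀, r). -/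

import Mathlib

open scoped RealInnerProductSpace
open Metric Set MeasureTheory

noncomputable section

abbrev E (N : ℕ) := EuclideanSpace ℝ (Fin N)

variable {N : ℕ}

/-- Reflection across the hyperplane `Π_p(s) = {x | x·p = s}`. -/
def reflect (p : E N) (s : ℝ) (x : E N) : E N := x - (2 * (⟪x, p⟫ - s)) • p

/-- Reflection across the hyperplane through the origin orthogonal to `p`. -/
def reflect0 (p : E N) : E N → E N := reflect p 0

/-- A finite root system of unit vectors. -/
def IsRootSystem (P : Set (E N)) : Prop :=
  P.Finite ∧ (∀ p ∈ P, ‖p‖ = 1) ∧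
  (∀ p ∈ P, {q | q ∈ P ∧ ∃ c : ℝ, q = c • p} = {p, -p}) ∧
  (∀ p ∈ P, reflect0 p '' P = P)

/-- Condition (EA): for every hyperplane through the origin (with normal `v ≠ 0`),
the part of `P` outside the hyperplane spans `ℝ^N`. -/
def CondEA (P : Set (E N)) : Prop :=
  ∀ v : E N, v ≠ 0 → Submodule.span ℝ {p | p ∈ P ∧ ⟪p, v⟫ ≠ 0} = ⊤

/-- The reflection property (RP) with respect to `P` and `ρ`. -/
def ReflProp (P : Set (E N)) (ρ : ℝ) (Ω : Set (E N)) : Prop :=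
  ∀ p ∈ P, ∀ s > ρ,
    reflect p s '' Ω ∩ {x | ⟪x, p⟫ < s} ⊆ Ω ∩ {x | ⟪x, p⟫ < s}

/-- `v` enumerates a basis of `ℝ^N` consisting of elements of `P`. -/
def BasisIn (P : Set (E N)) (v : Fin N → E N) : Prop :=
  (∀ i, v i ∈ P) ∧ LinearIndependent ℝ v ∧ Submodule.span ℝ (Set.range v) = ⊤

/-- The open cone `Co_r(A)` generated by a basis. -/
def Cone (r : ℝ) (v : Fin N → E N) : Set (E N) :=
  {x | ∃ a : Fin N → ℝ, (∀ i, 0 < a i) ∧ (∑ i, a i) < r ∧ x = ∑ i, a i • v i}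

/-- `σ₁(P)`. -/
def sigma1 (P : Set (E N)) : ℝ :=
  sInf {s | ∃ p₁ ∈ P, s = sSup {t | ∃ v : Fin N → E N, BasisIn P v ∧
    t = sInf (Set.range fun i => |⟪v i, p₁⟫|)}}

/-- `σ₂(P)`. -/
def sigma2 (P : Set (E N)) : ℝ :=
  sSup {t | ∃ x : E N, (∀ p ∈ P, |⟪p, x⟫| ≤ 1) ∧ t = ‖x‖}

/-- `σ₃(P)`. -/
def sigma3 (P : Set (E N)) : ℝ :=
  sInf {s | ∃ v : Fin N → E N, BasisIn P v ∧
    s = sSup {r | 0 < r ∧ ball ((1 / (2 * (N : ℝ))) • ∑ i, v i) r ⊆ Cone 1 v}}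

-- basic facts
lemma neg_mem_of_mem {P : Set (E N)} (hP : IsRootSystem P) {p : E N} (hp : p ∈ P) : -p ∈ P := by
  have h := hP.2.2.1 p hp
  have h2 : -p ∈ ({p, -p} : Set (E N)) := by simp
  rw [← h] at h2
  exact h2.1

lemma reflect_mem_of_mem {P : Set (E N)} (hP : IsRootSystem P) {p q : E N} (hp : p ∈ P)
    (hq : q ∈ P) : q - (2 * ⟪q, p⟫) • p ∈ P := by
  have h := hP.2.2.2 p hp
  have h2 : reflect0 p q ∈ reflect0 p '' P := Set.mem_image_of_mem _ hq
  rw [h] at h2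
  simpa [reflect0, reflect] using h2

lemma eq_zero_of_inner_span {S : Set (E N)} {x : E N} (hspan : Submodule.span ℝ S = ⊤)
    (h : ∀ y ∈ S, ⟪y, x⟫ = 0) : x = 0 := by
  have key : ∀ y ∈ Submodule.span ℝ S, ⟪y, x⟫ = 0 := by
    intro y hy
    induction hy using Submodule.span_induction with
    | mem z hz => exact h z hz
    | zero => simp
    | add a b _ _ ha hb => rw [inner_add_left, ha, hb, add_zero]
    | smul c a _ ha => rw [real_inner_smul_left, ha, mul_zero]
  have hx : ⟪x, x⟫ = 0 := key x (by rw [hspan]; trivial)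
  exact inner_self_eq_zero.mp hx

/-- Extract a basis (indexed by `Fin N`) from a finite spanning subset. -/
lemma exists_basisIn_subset {P S : Set (E N)} (hSP : S ⊆ P) (hS : S.Finite)
    (hspan : Submodule.span ℝ S = ⊤) :
    ∃ u : Fin N → E N, BasisIn P u ∧ ∀ i, u i ∈ S := by
  obtain ⟨b, hbS, hspanb, hind⟩ := exists_linearIndependent ℝ S
  have hbfin : b.Finite := hS.subset hbS
  haveI := hbfin.fintype
  have hb : Module.Basis b ℝ (E N) := Module.Basis.mk hind (by
    rw [Subtype.range_coe, hspanb, hspan])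
  have hcard : Fintype.card b = N := by
    have h := Module.finrank_eq_card_basis hb
    rw [finrank_euclideanSpace_fin] at h
    exact h.symm
  let e : Fin N ≃ b := (Fintype.equivFinOfCardEq hcard).symm
  have hrange : Set.range (fun i => (e i : E N)) = b := by
    have : (fun i => (e i : E N)) = Subtype.val ∘ e := rfl
    rw [this, Set.range_comp, Equiv.range_eq_univ, Set.image_univ, Subtype.range_coe]
  refine ⟨fun i => (e i : E N), ⟨?_, ?_, ?_⟩, ?_⟩
  · intro i; exact hSP (hbS (e i).2)
  · have : LinearIndependent ℝ (Subtype.val ∘ e : Fin N → E N) := hind.comp e e.injective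
    exact this
  · rw [hrange, hspanb, hspan]
  · intro i; exact hbS (e i).2

-- P spans
variable {P : Set (E N)}

lemma span_P_top (hEA : CondEA P) (hN : 1 ≤ N) : Submodule.span ℝ P = ⊤ := by
  have hv : (EuclideanSpace.single (⟨0, hN⟩ : Fin N) (1:ℝ)) ≠ 0 := by
    intro h
    have := congrArg (fun f => f ⟨0, hN⟩) h
    simp at this
  have h := hEA _ hv
  rw [eq_top_iff, ← h]
  exact Submodule.span_mono (fun p hp => hp.1)

lemma P_nonempty (hEA : CondEA P) (hN : 1 ≤ N) : P.Nonempty := by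
  rcases Set.eq_empty_or_nonempty P with h | h
  · exfalso
    have hs := span_P_top hEA hN
    rw [h] at hs
    simp only [Submodule.span_empty] at hs
    haveI : Nontrivial (E N) := ⟨EuclideanSpace.single (⟨0, hN⟩ : Fin N) (1:ℝ), 0, by
      intro hc
      have := congrArg (fun f => f ⟨0, hN⟩) hc
      simp at this⟩
    exact absurd hs bot_ne_top
  · exact h

/-- The inner `T` set in the definition of `sigma1`. -/
def sigma1T (P : Set (E N)) (p₁ : E N) : Set ℝ :=
  {t | ∃ v : Fin N → E N, BasisIn P v ∧ t = sInf (Set.range fun i => |⟪v i, p₁⟫|)}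

lemma sigma1_eq (P : Set (E N)) :
    sigma1 P = sInf {s | ∃ p₁ ∈ P, s = sSup (sigma1T P p₁)} := rfl

lemma sigma1T_finite (hPfin : P.Finite) (p₁ : E N) : (sigma1T P p₁).Finite := by
  have hV : {v : Fin N → E N | ∀ i, v i ∈ P}.Finite := by
    have : {v : Fin N → E N | ∀ i, v i ∈ P} = Set.pi Set.univ (fun _ => P) := by
      ext v; simp [Set.mem_pi]
    rw [this]
    exact Set.Finite.pi (fun _ => hPfin)
  apply Set.Finite.subset (hV.image (fun v => sInf (Set.range fun i => |⟪v i, p₁⟫|)))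
  rintro t ⟨v, hv, rfl⟩
  exact ⟨v, hv.1, rfl⟩

lemma sigma1S_finite (hPfin : P.Finite) :
    {s | ∃ p₁ ∈ P, s = sSup (sigma1T P p₁)}.Finite := by
  apply Set.Finite.subset (hPfin.image (fun p₁ => sSup (sigma1T P p₁)))
  rintro s ⟨p₁, hp₁, rfl⟩
  exact ⟨p₁, hp₁, rfl⟩

lemma sigma1T_nonempty (hEA : CondEA P) (hPfin : P.Finite) (hN : 1 ≤ N) (p₁ : E N) :
    (sigma1T P p₁).Nonempty := by
  obtain ⟨u, hu, _⟩ := exists_basisIn_subset (le_refl P) hPfin (span_P_top hEA hN)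
  exact ⟨_, u, hu, rfl⟩

/-- for any `p₁ ∈ P` there is a basis in `P` with all `|⟪u i, p₁⟫| ≥ σ₁`. -/
lemma exists_sigma1_basis (hP : IsRootSystem P) (hEA : CondEA P) (hN : 1 ≤ N)
    {p₁ : E N} (hp₁ : p₁ ∈ P) :
    ∃ u : Fin N → E N, BasisIn P u ∧ ∀ i, sigma1 P ≤ |⟪u i, p₁⟫| := by
  have hfin := sigma1S_finite (P := P) hP.1
  have hmem : sSup (sigma1T P p₁) ∈ {s | ∃ p₁ ∈ P, s = sSup (sigma1T P p₁)} :=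
    ⟨p₁, hp₁, rfl⟩
  have h1 : sigma1 P ≤ sSup (sigma1T P p₁) := by
    rw [sigma1_eq]
    exact csInf_le hfin.bddBelow hmem
  have h2 : sSup (sigma1T P p₁) ∈ sigma1T P p₁ :=
    (sigma1T_nonempty hEA hP.1 hN p₁).csSup_mem (sigma1T_finite hP.1 p₁)
  obtain ⟨u, hu, husup⟩ := h2
  refine ⟨u, hu, fun i => ?_⟩
  have h3 : sInf (Set.range fun i => |⟪u i, p₁⟫|) ≤ |⟪u i, p₁⟫| :=
    csInf_le (Set.finite_range _).bddBelow ⟨i, rfl⟩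
  linarith [h1, husup ▸ h3]

lemma sigma1_pos (hP : IsRootSystem P) (hEA : CondEA P) (hN : 1 ≤ N) : 0 < sigma1 P := by
  have hfin := sigma1S_finite (P := P) hP.1
  have hne : {s | ∃ p₁ ∈ P, s = sSup (sigma1T P p₁)}.Nonempty := by
    obtain ⟨p₁, hp₁⟩ := P_nonempty hEA hN
    exact ⟨_, p₁, hp₁, rfl⟩
  have hmem := hne.csInf_mem hfin
  rw [← sigma1_eq] at hmem
  obtain ⟨p₁, hp₁, heq⟩ := hmem
  -- use EA to find a basis with all inner products nonzero
  have hp₁0 : p₁ ≠ 0 := by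
    intro h
    have := hP.2.1 p₁ hp₁
    rw [h] at this; simp at this
  have hEA1 := hEA p₁ hp₁0
  obtain ⟨u, hu, humem⟩ := exists_basisIn_subset (S := {p | p ∈ P ∧ ⟪p, p₁⟫ ≠ 0})
    (fun p hp => hp.1) (hP.1.subset (fun p hp => hp.1)) hEA1
  have hT : sInf (Set.range fun i => |⟪u i, p₁⟫|) ∈ sigma1T P p₁ := ⟨u, hu, rfl⟩
  have hle : sInf (Set.range fun i => |⟪u i, p₁⟫|) ≤ sSup (sigma1T P p₁) :=
    le_csSup (sigma1T_finite hP.1 p₁).bddAbove hT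
  have hpos : 0 < sInf (Set.range fun i => |⟪u i, p₁⟫|) := by
    have hne' : (Set.range fun i => |⟪u i, p₁⟫|).Nonempty := ⟨_, ⟨⟨0, hN⟩, rfl⟩⟩
    have hmem' := hne'.csInf_mem (Set.finite_range _)
    obtain ⟨i, hi⟩ := hmem'
    rw [← hi]
    exact abs_pos.mpr (humem i).2
  rw [heq]
  linarith

lemma sigma1_le_one (hP : IsRootSystem P) (hEA : CondEA P) (hN : 1 ≤ N) : sigma1 P ≤ 1 := by
  obtain ⟨p₁, hp₁⟩ := P_nonempty hEA hN
  obtain ⟨u, hu, hge⟩ := exists_sigma1_basis hP hEA hN hp₁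
  have h := hge ⟨0, hN⟩
  have hb : |⟪u ⟨0, hN⟩, p₁⟫| ≤ 1 := by
    have := abs_real_inner_le_norm (u ⟨0, hN⟩) p₁
    rw [hP.2.1 _ (hu.1 _), hP.2.1 _ hp₁] at this
    simpa using this
  linarith

-- σ₂ facts
lemma norm_le_sigma2 (hP : IsRootSystem P) (hEA : CondEA P) (hN : 1 ≤ N) :
    (∀ x : E N, (∀ p ∈ P, |⟪p, x⟫| ≤ 1) → ‖x‖ ≤ sigma2 P) ∧ 1 ≤ sigma2 P := by
  obtain ⟨u, hu, _⟩ := exists_basisIn_subset (le_refl P) hP.1 (span_P_top hEA hN)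
  -- the linear map x ↦ (⟪u i, x⟫)
  set f : E N →ₗ[ℝ] (Fin N → ℝ) :=
    LinearMap.pi (fun i => (innerSL ℝ (u i)).toLinearMap) with hf
  have hfinj : Function.Injective f := by
    rw [← LinearMap.ker_eq_bot]
    rw [Submodule.eq_bot_iff]
    intro x hx
    have hx' : ∀ i, ⟪u i, x⟫ = 0 := fun i => congrFun hx i
    apply eq_zero_of_inner_span hu.2.2
    rintro y ⟨i, rfl⟩
    exact hx' i
  have hfr : Module.finrank ℝ (E N) = Module.finrank ℝ (Fin N → ℝ) := by
    rw [finrank_euclideanSpace_fin, Module.finrank_fin_fun]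
  have hfsurj : Function.Surjective f :=
    (LinearMap.injective_iff_surjective_of_finrank_eq_finrank hfr).mp hfinj
  let e : E N ≃ₗ[ℝ] (Fin N → ℝ) := LinearEquiv.ofBijective f ⟨hfinj, hfsurj⟩
  let g := LinearMap.toContinuousLinearMap (e.symm : (Fin N → ℝ) →ₗ[ℝ] E N)
  have hbdd : BddAbove {t | ∃ x : E N, (∀ p ∈ P, |⟪p, x⟫| ≤ 1) ∧ t = ‖x‖} := by
    refine ⟨‖g‖, ?_⟩
    rintro t ⟨x, hx, rfl⟩
    have hx1 : ‖f x‖ ≤ 1 := by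
      rw [pi_norm_le_iff_of_nonneg zero_le_one]
      intro i
      have := hx (u i) (hu.1 i)
      simpa [Real.norm_eq_abs, f] using this
    have hxeq : x = g (f x) := by
      show x = e.symm (e x)
      simp
    calc ‖x‖ = ‖g (f x)‖ := by rw [← hxeq]
    _ ≤ ‖g‖ * ‖f x‖ := g.le_opNorm _
    _ ≤ ‖g‖ * 1 := by
        apply mul_le_mul_of_nonneg_left hx1 (norm_nonneg _)
    _ = ‖g‖ := mul_one _
  constructor
  · intro x hx
    exact le_csSup hbdd ⟨x, hx, rfl⟩
  · obtain ⟨p₀, hp₀⟩ := P_nonempty hEA hN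
    have : (1:ℝ) ∈ {t | ∃ x : E N, (∀ p ∈ P, |⟪p, x⟫| ≤ 1) ∧ t = ‖x‖} := by
      refine ⟨p₀, fun p hp => ?_, (hP.2.1 _ hp₀).symm⟩
      have := abs_real_inner_le_norm p p₀
      rw [hP.2.1 _ hp, hP.2.1 _ hp₀] at this
      simpa using this
    exact le_csSup hbdd this

/-- Replacing one vector of a basis by a vector outside the span of the others
gives again a basis. -/
lemma basisIn_update {v : Fin N → E N} (hv : BasisIn P v) {i₀ : Fin N} {p : E N}
    (hp : p ∈ P)
    (hpH : p ∉ Submodule.span ℝ (Set.range (fun j : {j : Fin N // j ≠ i₀} => v j))) :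
    BasisIn P (Function.update v i₀ p) := by
  set H := Submodule.span ℝ (Set.range (fun j : {j : Fin N // j ≠ i₀} => v j)) with hH
  set T := Submodule.span ℝ (Set.range (Function.update v i₀ p)) with hT
  have hHT : H ≤ T := by
    apply Submodule.span_le.mpr
    rintro y ⟨⟨j, hj⟩, rfl⟩
    apply Submodule.subset_span
    exact ⟨j, by simp [Function.update_of_ne hj]⟩
  have hpT : p ∈ T := Submodule.subset_span ⟨i₀, by simp⟩
  have hlt : H < T := lt_of_le_of_ne hHT (by
    intro h
    rw [← h] at hpT
    exact hpH hpT)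
  -- finrank H = N - 1
  have hind' : LinearIndependent ℝ (fun j : {j : Fin N // j ≠ i₀} => v j) :=
    hv.2.1.comp _ Subtype.val_injective
  have hfrH : Module.finrank ℝ H = N - 1 := by
    rw [hH, finrank_span_eq_card hind']
    rw [Fintype.card_subtype_compl, Fintype.card_subtype_eq, Fintype.card_fin]
  have hfrT : Module.finrank ℝ T = N := by
    have h1 : Module.finrank ℝ H < Module.finrank ℝ T :=
      Submodule.finrank_lt_finrank_of_lt hlt
    have h2 : Module.finrank ℝ T ≤ N := by
      have := Submodule.finrank_le T
      rwa [finrank_euclideanSpace_fin] at this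
    have hN1 : 1 ≤ N := by
      rcases Nat.eq_zero_or_pos N with h | h
      · exact absurd i₀.2 (by omega)
      · exact h
    omega
  have hTtop : T = ⊤ := Submodule.eq_top_of_finrank_eq (by
    rw [hfrT, finrank_euclideanSpace_fin])
  have hcard : Fintype.card (Fin N) = Module.finrank ℝ (E N) := by
    rw [Fintype.card_fin, finrank_euclideanSpace_fin]
  refine ⟨?_, ?_, hTtop⟩
  · intro i
    rcases eq_or_ne i i₀ with rfl | h
    · simpa using hp
    · simpa [Function.update_of_ne h] using hv.1 i
  · have := (basisOfTopLeSpanOfCardEqFinrank (Function.update v i₀ p)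
      (le_of_eq hTtop.symm) hcard).linearIndependent
    rwa [coe_basisOfTopLeSpanOfCardEqFinrank] at this

/-- Key geometric lemma: a basis in `P` all of whose inner products with `x₀`
are at least `c`. -/
lemma exists_good_basis (hN : 1 ≤ N) (hP : IsRootSystem P) (hEA : CondEA P)
    {x₀ : E N} {c : ℝ} (hc : 0 < c)
    (hx : (sigma1 P)⁻¹ * sigma2 P * c ≤ ‖x₀‖) :
    ∃ v : Fin N → E N, BasisIn P v ∧ ∀ i, c ≤ ⟪v i, x₀⟫ := by
  have hs1 := sigma1_pos hP hEA hN
  have hs1le := sigma1_le_one hP hEA hN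
  have hs2 := (norm_le_sigma2 hP hEA hN).2
  have hs2' := (norm_le_sigma2 hP hEA hN).1
  have hs2pos : 0 < sigma2 P := lt_of_lt_of_le one_pos hs2
  -- maximizer p₁ of ⟪p, x₀⟫ over P
  obtain ⟨p₁, hp₁P, hp₁max⟩ := Finset.exists_max_image hP.1.toFinset
    (fun p => ⟪p, x₀⟫) (by
      obtain ⟨p, hp⟩ := P_nonempty hEA hN
      exact ⟨p, hP.1.mem_toFinset.mpr hp⟩)
  rw [Set.Finite.mem_toFinset] at hp₁P
  set g := ⟪p₁, x₀⟫ with hg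
  have habs : ∀ p ∈ P, |⟪p, x₀⟫| ≤ g := by
    intro p hp
    rw [abs_le]
    constructor
    · have := hp₁max (-p) (hP.1.mem_toFinset.mpr (neg_mem_of_mem hP hp))
      rw [inner_neg_left] at this
      linarith
    · exact hp₁max p (hP.1.mem_toFinset.mpr hp)
  have hx0 : x₀ ≠ 0 := by
    intro h
    rw [h, norm_zero] at hx
    have : 0 < (sigma1 P)⁻¹ * sigma2 P * c := by positivity
    linarith
  have hgpos : 0 < g := by
    rcases lt_or_ge 0 g with h | h
    · exact h
    · exfalso
      apply hx0
      apply eq_zero_of_inner_span (span_P_top hEA hN)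
      intro y hy
      have h1 := habs y hy
      have h2 : (0:ℝ) ≤ |⟪y, x₀⟫| := abs_nonneg _
      exact abs_eq_zero.mp (le_antisymm (h1.trans h) h2)
  -- ‖x₀‖ ≤ σ₂ g
  have hnorm : ‖x₀‖ ≤ sigma2 P * g := by
    have h1 : ‖g⁻¹ • x₀‖ ≤ sigma2 P := by
      apply hs2'
      intro p hp
      rw [real_inner_smul_right, abs_mul, abs_inv, abs_of_pos hgpos]
      calc g⁻¹ * |⟪p, x₀⟫| ≤ g⁻¹ * g := by
            apply mul_le_mul_of_nonneg_left (habs p hp) (by positivity)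
      _ = 1 := inv_mul_cancel₀ hgpos.ne'
    rw [norm_smul, Real.norm_eq_abs, abs_inv, abs_of_pos hgpos] at h1
    calc ‖x₀‖ = g * (g⁻¹ * ‖x₀‖) := by field_simp
    _ ≤ g * sigma2 P := mul_le_mul_of_nonneg_left h1 hgpos.le
    _ = sigma2 P * g := mul_comm _ _
  -- c ≤ σ₁ * g
  have hcg : c ≤ sigma1 P * g := by
    have h1 : (sigma1 P)⁻¹ * sigma2 P * c ≤ sigma2 P * g := hx.trans hnorm
    have h2 : sigma2 P * ((sigma1 P)⁻¹ * c) ≤ sigma2 P * g := by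
      calc sigma2 P * ((sigma1 P)⁻¹ * c) = (sigma1 P)⁻¹ * sigma2 P * c := by ring
      _ ≤ sigma2 P * g := h1
    have h3 : (sigma1 P)⁻¹ * c ≤ g := le_of_mul_le_mul_left h2 hs2pos
    calc c = sigma1 P * ((sigma1 P)⁻¹ * c) := by field_simp
    _ ≤ sigma1 P * g := mul_le_mul_of_nonneg_left h3 hs1.le
  -- the finite set of bases
  have hBfin : {v : Fin N → E N | BasisIn P v}.Finite := by
    have hV : {v : Fin N → E N | ∀ i, v i ∈ P}.Finite := by
      have : {v : Fin N → E N | ∀ i, v i ∈ P} = Set.pi Set.univ (fun _ => P) := by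
        ext v; simp [Set.mem_pi]
      rw [this]; exact Set.Finite.pi (fun _ => hP.1)
    exact hV.subset (fun v hv => hv.1)
  obtain ⟨v, hvB, hvmax⟩ := Finset.exists_max_image hBfin.toFinset
    (fun v => ∑ i, ⟪v i, x₀⟫) (by
      obtain ⟨u, hu, _⟩ := exists_basisIn_subset (le_refl P) hP.1 (span_P_top hEA hN)
      exact ⟨u, hBfin.mem_toFinset.mpr hu⟩)
  rw [Set.Finite.mem_toFinset] at hvB
  refine ⟨v, hvB, fun i => ?_⟩
  -- main claim : σ₁ * g ≤ ⟪v i, x₀⟫, by contradiction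
  by_contra hcon
  push_neg at hcon
  have hdlt : ⟪v i, x₀⟫ < sigma1 P * g := lt_of_lt_of_le hcon hcg |>.trans_le (le_refl _)
  set i₀ := i
  set d := ⟪v i₀, x₀⟫ with hd
  set H := Submodule.span ℝ (Set.range (fun j : {j : Fin N // j ≠ i₀} => v j)) with hH
  -- exchange lemma
  have hexch : ∀ p ∈ P, p ∉ H → ⟪p, x₀⟫ ≤ d := by
    intro p hp hpH
    have hv' := basisIn_update hvB hp hpH
    have hsum := hvmax (Function.update v i₀ p) (hBfin.mem_toFinset.mpr hv')
    have hfun : (fun j => ⟪Function.update v i₀ p j, x₀⟫) =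
        Function.update (fun j => ⟪v j, x₀⟫) i₀ ⟪p, x₀⟫ := by
      funext j
      rcases eq_or_ne j i₀ with rfl | h
      · rw [Function.update_apply, Function.update_apply, if_pos rfl, if_pos rfl]
      · simp [Function.update_of_ne h]
    rw [show (∑ j, ⟪Function.update v i₀ p j, x₀⟫) =
        ∑ j, Function.update (fun j => ⟪v j, x₀⟫) i₀ ⟪p, x₀⟫ j from by rw [← hfun]] at hsum
    rw [Finset.sum_update_of_mem (Finset.mem_univ i₀)] at hsum
    have hsplit : ∑ j, ⟪v j, x₀⟫ =
        (∑ j ∈ Finset.univ \ {i₀}, ⟪v j, x₀⟫) + ⟪v i₀, x₀⟫ :=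
      Finset.sum_eq_sum_sdiff_singleton_add (Finset.mem_univ i₀) _
    rw [hsplit] at hsum
    linarith
  -- p₁ ∈ H
  have hp₁H : p₁ ∈ H := by
    by_contra h
    have := hexch p₁ hp₁P h
    nlinarith
  -- a nonzero orthogonal vector to H
  have hHne : H ≠ ⊤ := by
    intro h
    have hind' : LinearIndependent ℝ (fun j : {j : Fin N // j ≠ i₀} => v j) :=
      hvB.2.1.comp _ Subtype.val_injective
    have hfrH : Module.finrank ℝ H = N - 1 := by
      rw [hH, finrank_span_eq_card hind']
      rw [Fintype.card_subtype_compl, Fintype.card_subtype_eq, Fintype.card_fin]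
    rw [h] at hfrH
    rw [finrank_top, finrank_euclideanSpace_fin] at hfrH
    omega
  have hworth : Hᗮ ≠ ⊥ := by
    intro h
    exact hHne (Submodule.orthogonal_eq_bot_iff.mp h)
  obtain ⟨w, hwH, hw0⟩ := Submodule.ne_bot_iff _ |>.mp hworth
  have hwinner : ∀ y ∈ H, ⟪y, w⟫ = 0 := (Submodule.mem_orthogonal H w).mp hwH
  have hp₁w : ⟪p₁, w⟫ = 0 := hwinner p₁ hp₁H
  -- σ₁-basis for p₁
  obtain ⟨u, huB, huge⟩ := exists_sigma1_basis hP hEA hN hp₁P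
  have hk : ∃ k, ⟪u k, w⟫ ≠ 0 := by
    by_contra h
    push_neg at h
    apply hw0
    apply eq_zero_of_inner_span huB.2.2
    rintro y ⟨k, rfl⟩
    exact h k
  obtain ⟨k, hkw⟩ := hk
  have hnotH : ∀ y : E N, ⟪y, w⟫ ≠ 0 → y ∉ H := fun y hy h => hy (hwinner y h)
  have hukH : u k ∉ H := hnotH _ hkw
  set a := ⟪u k, p₁⟫ with ha
  set b := ⟪u k, x₀⟫ with hb
  have hbabs : |b| ≤ d := by
    rw [abs_le]
    constructor
    · have h1 := hexch (-(u k)) (neg_mem_of_mem hP (huB.1 k)) (by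
        intro h
        exact hukH (by simpa using H.neg_mem h))
      rw [inner_neg_left] at h1
      linarith
    · exact hexch (u k) (huB.1 k) hukH
  -- the reflected vector
  set q := u k - (2 * a) • p₁ with hq
  have hqP : q ∈ P := reflect_mem_of_mem hP hp₁P (huB.1 k)
  have hqw : ⟪q, w⟫ ≠ 0 := by
    rw [hq, inner_sub_left, real_inner_smul_left, hp₁w, mul_zero, sub_zero]
    exact hkw
  have hqH : q ∉ H := hnotH _ hqw
  have hqx : ⟪q, x₀⟫ = b - 2 * a * g := by
    rw [hq, inner_sub_left, real_inner_smul_left, ← hg, ← hb]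
  have hqabs : |b - 2 * a * g| ≤ d := by
    rw [← hqx, abs_le]
    constructor
    · have h1 := hexch (-q) (neg_mem_of_mem hP hqP) (by
        intro h
        exact hqH (by simpa using H.neg_mem h))
      rw [inner_neg_left] at h1
      linarith
    · exact hexch q hqP hqH
  -- contradiction
  have hka := huge k
  rw [← ha] at hka
  have h2ag : |2 * a * g| ≤ 2 * d := by
    calc |2 * a * g| = |b - (b - 2 * a * g)| := by ring_nf
    _ ≤ |b| + |b - 2 * a * g| := abs_sub _ _
    _ ≤ 2 * d := by linarith
  have h2ag' : 2 * (sigma1 P) * g ≤ |2 * a * g| := by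
    rw [abs_mul, abs_mul]
    have : |(2:ℝ)| = 2 := by norm_num
    rw [this, abs_of_pos hgpos]
    nlinarith
  nlinarith

/-- One sliding step from the reflection property. -/
lemma step_notin (hRP : ReflProp P ρ Ω) {p : E N} (hp : p ∈ P) (hnorm : ‖p‖ = 1)
    {x : E N} (hx : x ∉ Ω) (hinner : ρ < ⟪x, p⟫) {t : ℝ} (ht : 0 < t) :
    x + t • p ∉ Ω := by
  intro hmem
  set s := ⟪x, p⟫ + t / 2 with hs
  have hsρ : s > ρ := by simp only [hs]; linarith
  have hpp : ⟪p, p⟫ = 1 := by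
    rw [real_inner_self_eq_norm_sq, hnorm]; norm_num
  have h1 : reflect p s (x + t • p) = x := by
    unfold reflect
    rw [inner_add_left, real_inner_smul_left, hpp, mul_one]
    have : 2 * (⟪x, p⟫ + t - s) = t := by rw [hs]; ring
    rw [this]
    abel
  have h2 : x ∈ reflect p s '' Ω ∩ {y | ⟪y, p⟫ < s} := by
    refine ⟨⟨x + t • p, hmem, h1⟩, ?_⟩
    simp only [Set.mem_setOf_eq, hs]
    linarith
  exact hx (hRP p hp s hsρ h2).1

/-- Iterated chain of sliding steps. -/
lemma chain_notin (hRP : ReflProp P ρ Ω) (hPnorm : ∀ p ∈ P, ‖p‖ = 1)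
    {v : Fin N → E N} (hv : ∀ i, v i ∈ P) {a : Fin N → ℝ} (ha : ∀ i, 0 < a i)
    {x : E N} (hx : x ∉ Ω)
    (hin : ∀ (i : Fin N) (s : Finset (Fin N)), ρ < ⟪x + ∑ j ∈ s, a j • v j, v i⟫) :
    ∀ s : Finset (Fin N), x + ∑ j ∈ s, a j • v j ∉ Ω := by
  intro s
  induction s using Finset.induction_on with
  | empty => simpa using hx
  | insert j s' hj ih =>
    have hstep := step_notin hRP (hv j) (hPnorm _ (hv j)) ih (hin j s') (ha j)
    rw [Finset.sum_insert hj]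
    have : x + (a j • v j + ∑ i ∈ s', a i • v i) =
        x + (∑ i ∈ s', a i • v i) + a j • v j := by abel
    rw [this]
    exact hstep

/-- bound on the inner product of a cone combination with a unit vector. -/
lemma abs_inner_combo_le (hPnorm : ∀ p ∈ P, ‖p‖ = 1) {v : Fin N → E N}
    (hv : ∀ i, v i ∈ P) {p : E N} (hp : p ∈ P) {a : Fin N → ℝ} (ha : ∀ i, 0 ≤ a i)
    (s : Finset (Fin N)) :
    |⟪∑ j ∈ s, a j • v j, p⟫| ≤ ∑ j ∈ s, a j := by
  rw [sum_inner]
  calc |∑ j ∈ s, ⟪a j • v j, p⟫| ≤ ∑ j ∈ s, |⟪a j • v j, p⟫| :=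
        Finset.abs_sum_le_sum_abs _ _
  _ ≤ ∑ j ∈ s, a j := by
      apply Finset.sum_le_sum
      intro j _
      rw [real_inner_smul_left, abs_mul, abs_of_nonneg (ha j)]
      calc a j * |⟪v j, p⟫| ≤ a j * 1 := by
            apply mul_le_mul_of_nonneg_left _ (ha j)
            have := abs_real_inner_le_norm (v j) p
            rwa [hPnorm _ (hv j), hPnorm _ hp, mul_one] at this
      _ = a j := mul_one _


/-- cone property at points outside `𝔅_r`, with cone directions
depending only on `P`, `ρ`, `r` and `x₀` (and not on `Ω`). -/
theorem cone_property (N : ℕ) (hN : 1 ≤ N) (P : Set (E N))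
    (hP : IsRootSystem P) (hEA : CondEA P) (ρ r : ℝ) (hρ : 0 ≤ ρ) (hr : 0 < r)
    (x₀ : E N) (hx₀ : x₀ ∉ ball (0 : E N) ((sigma1 P)⁻¹ * sigma2 P * (ρ + 2 * r))) :
    ∃ v : Fin N → E N, BasisIn P v ∧
      ∀ Ω : Set (E N), ReflProp P ρ Ω →
        ball (0 : E N) ((sigma1 P)⁻¹ * sigma2 P * (ρ + 2 * r)) ⊆ Ω →
        (∀ x ∈ Ωᶜ ∩ ball x₀ r, ∀ z ∈ Cone r v, x + z ∈ Ωᶜ) ∧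
        (∀ y ∈ Ω ∩ ball x₀ r, ∀ z ∈ Cone r v, y - z ∈ Ω) := by
  have hc : (0:ℝ) < ρ + 2 * r := by linarith
  have hx₀' : (sigma1 P)⁻¹ * sigma2 P * (ρ + 2 * r) ≤ ‖x₀‖ := by
    rw [Metric.mem_ball, dist_zero_right] at hx₀
    linarith [not_lt.mp hx₀]
  obtain ⟨v, hvB, hvc⟩ := exists_good_basis hN hP hEA hc hx₀'
  have hPnorm := hP.2.1
  refine ⟨v, hvB, fun Ω hRP _hball => ⟨?_, ?_⟩⟩
  · -- forward cone in the complement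
    rintro x ⟨hxc, hxb⟩ z ⟨a, hapos, hasum, rfl⟩
    rw [Set.mem_compl_iff] at hxc ⊢
    have hin : ∀ (i : Fin N) (s : Finset (Fin N)), ρ < ⟪x + ∑ j ∈ s, a j • v j, v i⟫ := by
      intro i s
      rw [inner_add_left]
      have h1 : |⟪∑ j ∈ s, a j • v j, v i⟫| ≤ ∑ j ∈ s, a j :=
        abs_inner_combo_le hPnorm hvB.1 (hvB.1 i) (fun j => (hapos j).le) s
      have h2 : ∑ j ∈ s, a j ≤ ∑ j, a j :=
        Finset.sum_le_sum_of_subset_of_nonneg (Finset.subset_univ s)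
          (fun j _ _ => (hapos j).le)
      have h3 : ρ + r < ⟪x, v i⟫ := by
        have hx0i : ρ + 2 * r ≤ ⟪v i, x₀⟫ := hvc i
        have hdist : ‖x - x₀‖ < r := by
          rw [Metric.mem_ball, dist_eq_norm] at hxb
          exact hxb
        have hxs : ⟪x, v i⟫ = ⟪x₀, v i⟫ + ⟪x - x₀, v i⟫ := by
          rw [← inner_add_left]; congr 1; abel
        have habs : |⟪x - x₀, v i⟫| ≤ ‖x - x₀‖ := by
          have := abs_real_inner_le_norm (x - x₀) (v i)
          rwa [hPnorm _ (hvB.1 i), mul_one] at this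
        have := abs_le.mp habs
        rw [hxs]; rw [real_inner_comm] at hx0i
        linarith
      have := abs_le.mp h1
      linarith
    have := chain_notin hRP hPnorm hvB.1 hapos hxc hin Finset.univ
    exact this
  · -- backward cone in Ω
    rintro y ⟨hy, hyb⟩ z ⟨a, hapos, hasum, rfl⟩
    by_contra hcon
    have hin : ∀ (i : Fin N) (s : Finset (Fin N)),
        ρ < ⟪(y - ∑ j, a j • v j) + ∑ j ∈ s, a j • v j, v i⟫ := by
      intro i s
      have hsplit : (y - ∑ j, a j • v j) + ∑ j ∈ s, a j • v j
          = y - ∑ j ∈ sᶜ, a j • v j := by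
        rw [← Finset.sum_add_sum_compl s (fun j => a j • v j)]
        abel
      rw [hsplit, inner_sub_left]
      have h1 : |⟪∑ j ∈ sᶜ, a j • v j, v i⟫| ≤ ∑ j ∈ sᶜ, a j :=
        abs_inner_combo_le hPnorm hvB.1 (hvB.1 i) (fun j => (hapos j).le) sᶜ
      have h2 : ∑ j ∈ sᶜ, a j ≤ ∑ j, a j :=
        Finset.sum_le_sum_of_subset_of_nonneg (Finset.subset_univ sᶜ)
          (fun j _ _ => (hapos j).le)
      have h3 : ρ + r < ⟪y, v i⟫ := by
        have hx0i : ρ + 2 * r ≤ ⟪v i, x₀⟫ := hvc i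
        have hdist : ‖y - x₀‖ < r := by
          rw [Metric.mem_ball, dist_eq_norm] at hyb
          exact hyb
        have hxs : ⟪y, v i⟫ = ⟪x₀, v i⟫ + ⟪y - x₀, v i⟫ := by
          rw [← inner_add_left]; congr 1; abel
        have habs : |⟪y - x₀, v i⟫| ≤ ‖y - x₀‖ := by
          have := abs_real_inner_le_norm (y - x₀) (v i)
          rwa [hPnorm _ (hvB.1 i), mul_one] at this
        have := abs_le.mp habs
        rw [hxs]; rw [real_inner_comm] at hx0i
        linarith
      have := abs_le.mp h1
      linarith
    have hchain := chain_notin hRP hPnorm hvB.1 hapos hcon hin Finset.univ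
    apply hchain
    have : (y - ∑ j, a j • v j) + ∑ j, a j • v j = y := by abel
    rw [this]
    exact hy
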